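/- For every n ≥ 0, the number of eight-vertex model configurations on SG(n) is E(n) = 2^{3·(3^n+1)/2} (note 3^n+1 is even), and the entropy per site exists and equals ln 2, i.e. ln E(n)/v(n) → ln 2 as n → ∞, where v(n) = 3·(3^n+1)/2. -/

import Mathlib

/-- The sextuple of boundary counts `(g, pa, pb, pc, pd, r)` for the
eight-vertex model on the Sierpinski gasket `SG(n)`. -/
structure EVCounts where
  g : ℕ
  pa : ℕ
  pb : ℕ
  pc : ℕ
  pd : ℕ
  r : ℕ

/-- One step of the recursion for the eight-vertex model on `SG(n)`. -/
def evStep (s : EVCounts) : EVCounts :=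
  let g := s.g
  let pa := s.pa
  let pb := s.pb
  let pc := s.pc
  let pd := s.pd
  let r := s.r
  { g := 4*g^3 + 8*g^2*pa + 8*g^2*pb + 12*g^2*pc + 4*g^2*pd + 5*g*pa^2 + 5*g*pb^2
      + 10*g*pa*pb + 12*g*pa*pc + 4*g*pa*pd + 12*g*pb*pc + 4*g*pb*pd + 4*g^2*r
      + pa^3 + pb^3 + 3*pa^2*pb + 3*pa^2*pc + pa^2*pd + 3*pb^2*pa + 3*pb^2*pc
      + pb^2*pd + 6*pa*pb*pc + 2*pa*pb*pd + 4*g*pa*r + 4*g*pb*r + pa^2*r + pb^2*r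
      + 2*pa*pb*r
    pa := 2*g^2*pa + 2*g^2*pb + 3*g*pa^2 + 3*g*pb^2 + 6*g*pa*pb + 6*g*pa*pc
      + 2*g*pa*pd + 6*g*pb*pc + 2*g*pb*pd + 4*g^2*r + pa^3 + pb^3 + 3*pa^2*pb
      + 3*pa^2*pc + pa^2*pd + 3*pb^2*pa + 3*pb^2*pc + pb^2*pd + 6*pa*pb*pc
      + 2*pa*pb*pd + 8*g*pa*r + 8*g*pb*r + 12*g*pc*r + 4*g*pd*r + 3*pa^2*r
      + 3*pb^2*r + 6*pa*pb*r + 6*pa*pc*r + 2*pa*pd*r + 6*pb*pc*r + 2*pb*pd*r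
      + 4*g*r^2 + 2*pa*r^2 + 2*pb*r^2
    pb := 2*g^2*pa + 2*g^2*pb + 3*g*pa^2 + 3*g*pb^2 + 6*g*pa*pb + 6*g*pa*pc
      + 2*g*pa*pd + 6*g*pb*pc + 2*g*pb*pd + 4*g^2*r + pa^3 + pb^3 + 3*pa^2*pb
      + 3*pa^2*pc + pa^2*pd + 3*pb^2*pa + 3*pb^2*pc + pb^2*pd + 6*pa*pb*pc
      + 2*pa*pb*pd + 8*g*pa*r + 8*g*pb*r + 12*g*pc*r + 4*g*pd*r + 3*pa^2*r
      + 3*pb^2*r + 6*pa*pb*r + 6*pa*pc*r + 2*pa*pd*r + 6*pb*pc*r + 2*pb*pd*r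
      + 4*g*r^2 + 2*pa*r^2 + 2*pb*r^2
    pc := g^3 + 3*g^2*pa + 3*g^2*pb + 3*g*pa^2 + 3*g*pb^2 + 6*g*pa*pb + 3*g^2*r
      + pa^3 + pb^3 + 27*pc^3 + pd^3 + 3*pa^2*pb + 3*pb^2*pa + 27*pc^2*pd
      + 9*pd^2*pc + 6*g*pa*r + 6*g*pb*r + 3*pa^2*r + 3*pb^2*r + 6*pa*pb*r
      + 3*g*r^2 + 3*pa*r^2 + 3*pb*r^2 + r^3
    pd := g^3 + 3*g^2*pa + 3*g^2*pb + 3*g*pa^2 + 3*g*pb^2 + 6*g*pa*pb + 3*g^2*r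
      + pa^3 + pb^3 + 27*pc^3 + pd^3 + 3*pa^2*pb + 3*pb^2*pa + 27*pc^2*pd
      + 9*pd^2*pc + 6*g*pa*r + 6*g*pb*r + 3*pa^2*r + 3*pb^2*r + 6*pa*pb*r
      + 3*g*r^2 + 3*pa*r^2 + 3*pb*r^2 + r^3
    r := g*pa^2 + g*pb^2 + 2*g*pa*pb + pa^3 + pb^3 + 3*pa^2*pb + 3*pa^2*pc
      + pa^2*pd + 3*pb^2*pa + 3*pb^2*pc + pb^2*pd + 6*pa*pb*pc + 2*pa*pb*pd
      + 4*g*pa*r + 4*g*pb*r + 5*pa^2*r + 5*pb^2*r + 10*pa*pb*r + 12*pa*pc*r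
      + 4*pa*pd*r + 12*pb*pc*r + 4*pb*pd*r + 4*g*r^2 + 8*pa*r^2 + 8*pb*r^2
      + 12*pc*r^2 + 4*pd*r^2 + 4*r^3 }

/-- The eight-vertex boundary counts at stage `n`. -/
def evSeq : ℕ → EVCounts
  | 0 => ⟨0, 0, 1, 0, 1, 0⟩
  | n + 1 => evStep (evSeq n)

def evg (n : ℕ) : ℕ := (evSeq n).g
def evpa (n : ℕ) : ℕ := (evSeq n).pa
def evpb (n : ℕ) : ℕ := (evSeq n).pb
def evpc (n : ℕ) : ℕ := (evSeq n).pc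
def evpd (n : ℕ) : ℕ := (evSeq n).pd
def evr (n : ℕ) : ℕ := (evSeq n).r

/-- The total number of eight-vertex model configurations on `SG(n)`. -/
def evE (n : ℕ) : ℕ :=
  6 * evg n + 6 * evpa n + 6 * evpb n + 6 * evpc n + 2 * evpd n + 6 * evr n

/-- The number of vertices of `SG(n)` (the division is exact). -/
def vSG (n : ℕ) : ℕ := 3 * (3 ^ n + 1) / 2


def eexp : ℕ → ℕ
  | 0 => 1
  | n + 1 => 3 * eexp n + 7

lemma evSeq_succ_eq (n : ℕ) : evSeq (n + 1) =
    ⟨2 ^ eexp n, 2 ^ eexp n, 2 ^ eexp n, 2 ^ eexp n, 2 ^ eexp n, 2 ^ eexp n⟩ := by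
  induction n with
  | zero => rfl
  | succ k ih =>
    have hk : (2 : ℕ) ^ eexp (k + 1) = 128 * (2 ^ eexp k) ^ 3 := by
      show (2:ℕ) ^ (3 * eexp k + 7) = _
      rw [show (128:ℕ) = 2 ^ 7 from rfl, ← pow_mul, ← pow_add]
      congr 1; ring
    show evStep (evSeq (k + 1)) = _
    rw [ih]
    simp only [evStep, EVCounts.mk.injEq]
    refine ⟨?_, ?_, ?_, ?_, ?_, ?_⟩ <;> (rw [hk]; ring)

lemma two_mul_vexp (n : ℕ) : 2 * (eexp n + 5) = 3 * (3 ^ (n + 1) + 1) := by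
  induction n with
  | zero => rfl
  | succ k ih => show 2 * (3 * eexp k + 7 + 5) = _; omega

lemma evE_eq (n : ℕ) : evE n = 2 ^ vSG n := by
  cases n with
  | zero => decide
  | succ k =>
    have h1 : vSG (k + 1) = eexp k + 5 := by
      have := two_mul_vexp k
      simp only [vSG]; omega
    have h2 : evE (k + 1) = 32 * 2 ^ eexp k := by
      simp only [evE, evg, evpa, evpb, evpc, evpd, evr, evSeq_succ_eq k]; ring
    rw [h1, h2, pow_add]; ring

lemma vSG_pos (n : ℕ) : 0 < vSG n := by
  have h1 : (1:ℕ) ≤ 3 ^ n := Nat.one_le_pow _ _ (by norm_num)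
  have : 6 / 2 ≤ 3 * (3 ^ n + 1) / 2 := Nat.div_le_div_right (by omega)
  simpa [vSG] using lt_of_lt_of_le (by norm_num : (0:ℕ) < 6 / 2) this

theorem stmt_17 :
    (∀ n : ℕ, evE n = 2 ^ (3 * (3 ^ n + 1) / 2)) ∧
    Filter.Tendsto (fun n => Real.log (evE n) / (vSG n : ℝ))
      Filter.atTop (nhds (Real.log 2)) := by
  have hE : ∀ n : ℕ, evE n = 2 ^ (3 * (3 ^ n + 1) / 2) := fun n => evE_eq n
  refine ⟨hE, ?_⟩
  have hconst : ∀ n : ℕ, Real.log (evE n) / (vSG n : ℝ) = Real.log 2 := by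
    intro n
    have hv : (vSG n : ℝ) ≠ 0 := by
      exact_mod_cast (vSG_pos n).ne'
    rw [evE_eq n]
    push_cast
    rw [Real.log_pow]
    field_simp
  simp only [funext hconst]
  exact tendsto_const_nhds
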